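/- Let S₁, S₂ be self-adjoint operators in H, p ∈ [1,∞], and m ∈ ℕ. If (S₂ - z)^{-m} - (S₁ - z)^{-m} ∈ B_p(H) for all z ∈ ℂ \ ℝ, then (S₂ - z)^{-n} - (S₁ - z)^{-n} ∈ B_p(H) for all z ∈ ℂ \ ℝ and all n ≥ m. -/
import Mathlib


open scoped ENNReal
open scoped Pointwise

/-- The `n`-th approximation number of a bounded operator `T` on a Hilbert space:
the distance from `T` to operators of rank at most `n`.  For compact operators on a
Hilbert space these coincide with the singular values. -/
noncomputable def approxNumber {H : Type*} [NormedAddCommGroup H] [InnerProductSpace ℂ H]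
    (n : ℕ) (T : H →L[ℂ] H) : ℝ :=
  sInf {c : ℝ | ∃ F : H →L[ℂ] H,
    FiniteDimensional ℂ (LinearMap.range (F : H →ₗ[ℂ] H)) ∧
    Module.finrank ℂ (LinearMap.range (F : H →ₗ[ℂ] H)) ≤ n ∧ c = ‖T - F‖}

/-- Membership in the Schatten class `B_p(H)` for `p ∈ [1,∞]` (`p : ℝ≥0∞`):
for `p = ∞` this is compactness, and for finite `p` it additionally requires the
summability of the `p`-th powers of the approximation numbers (= singular values). -/
def MemSchattenE {H : Type*} [NormedAddCommGroup H] [InnerProductSpace ℂ H]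
    (p : ℝ≥0∞) (T : H →L[ℂ] H) : Prop :=
  IsCompactOperator T ∧ (p ≠ ⊤ → Summable (fun n => approxNumber n T ^ p.toReal))

namespace SchattenAux

variable {H : Type*} [NormedAddCommGroup H] [InnerProductSpace ℂ H]

/-- The defining set for the approximation numbers. -/
def apxSet (n : ℕ) (T : H →L[ℂ] H) : Set ℝ :=
  {c : ℝ | ∃ F : H →L[ℂ] H,
    FiniteDimensional ℂ (LinearMap.range (F : H →ₗ[ℂ] H)) ∧
    Module.finrank ℂ (LinearMap.range (F : H →ₗ[ℂ] H)) ≤ n ∧ c = ‖T - F‖}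

lemma approxNumber_def (n : ℕ) (T : H →L[ℂ] H) : approxNumber n T = sInf (apxSet n T) := rfl

lemma norm_mem_apxSet (n : ℕ) (T : H →L[ℂ] H) : ‖T‖ ∈ apxSet n T := by
  refine ⟨0, ?_, ?_, by simp⟩
  · rw [ContinuousLinearMap.coe_zero, LinearMap.range_zero]
    infer_instance
  · rw [ContinuousLinearMap.coe_zero, LinearMap.range_zero, finrank_bot]
    exact Nat.zero_le n

lemma apxSet_nonempty (n : ℕ) (T : H →L[ℂ] H) : (apxSet n T).Nonempty :=
  ⟨_, norm_mem_apxSet n T⟩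

lemma apxSet_bddBelow (n : ℕ) (T : H →L[ℂ] H) : BddBelow (apxSet n T) := by
  refine ⟨0, ?_⟩
  rintro c ⟨F, -, -, rfl⟩
  positivity

lemma approxNumber_nonneg (n : ℕ) (T : H →L[ℂ] H) : 0 ≤ approxNumber n T := by
  rw [approxNumber_def]
  refine le_csInf (apxSet_nonempty n T) ?_
  rintro c ⟨F, -, -, rfl⟩
  positivity

lemma approxNumber_le_of_mem {n : ℕ} {T : H →L[ℂ] H} {c : ℝ} (hc : c ∈ apxSet n T) :
    approxNumber n T ≤ c :=
  csInf_le (apxSet_bddBelow n T) hc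

lemma apxSet_mono {n n' : ℕ} (h : n ≤ n') (T : H →L[ℂ] H) : apxSet n T ⊆ apxSet n' T := by
  rintro c ⟨F, h1, h2, rfl⟩
  exact ⟨F, h1, h2.trans h, rfl⟩

lemma approxNumber_antitone {n n' : ℕ} (h : n ≤ n') (T : H →L[ℂ] H) :
    approxNumber n' T ≤ approxNumber n T :=
  csInf_le_csInf (apxSet_bddBelow _ _) (apxSet_nonempty _ _) (apxSet_mono h T)

lemma approxNumber_zero_op (n : ℕ) : approxNumber n (0 : H →L[ℂ] H) = 0 := by
  refine le_antisymm ?_ (approxNumber_nonneg n 0)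
  have : (0 : ℝ) ∈ apxSet n (0 : H →L[ℂ] H) := by
    refine ⟨0, ?_, ?_, by simp⟩
    · rw [ContinuousLinearMap.coe_zero, LinearMap.range_zero]
      infer_instance
    · rw [ContinuousLinearMap.coe_zero, LinearMap.range_zero, finrank_bot]
      exact Nat.zero_le n
  exact approxNumber_le_of_mem this

lemma approxNumber_mul_le (C A D : H →L[ℂ] H) (n : ℕ) :
    approxNumber n (C * A * D) ≤ (‖C‖ * ‖D‖) * approxNumber n A := by
  have hK : (0 : ℝ) ≤ ‖C‖ * ‖D‖ := by positivity
  rw [approxNumber_def, approxNumber_def, ← smul_eq_mul (a := ‖C‖ * ‖D‖),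
    ← Real.sInf_smul_of_nonneg hK]
  refine le_csInf ((apxSet_nonempty n A).smul_set) ?_
  rintro x hx
  rw [Set.mem_smul_set] at hx
  obtain ⟨cval, ⟨F, h1, h2, rfl⟩, rfl⟩ := hx
  have hcoe : ((C * F * D : H →L[ℂ] H) : H →ₗ[ℂ] H)
      = ((C : H →ₗ[ℂ] H) ∘ₗ (F : H →ₗ[ℂ] H)) ∘ₗ (D : H →ₗ[ℂ] H) := rfl
  have hrange_le : LinearMap.range ((C * F * D : H →L[ℂ] H) : H →ₗ[ℂ] H) ≤
      Submodule.map (C : H →ₗ[ℂ] H) (LinearMap.range (F : H →ₗ[ℂ] H)) := by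
    rw [hcoe]
    rintro x ⟨y, rfl⟩
    exact ⟨F (D y), ⟨D y, rfl⟩, rfl⟩
  have hFDmap : FiniteDimensional ℂ
      (Submodule.map (C : H →ₗ[ℂ] H) (LinearMap.range (F : H →ₗ[ℂ] H))) :=
    Module.Finite.map _ _
  have hFD : FiniteDimensional ℂ (LinearMap.range ((C * F * D : H →L[ℂ] H) : H →ₗ[ℂ] H)) :=
    Submodule.finiteDimensional_of_le hrange_le
  have hrank : Module.finrank ℂ (LinearMap.range ((C * F * D : H →L[ℂ] H) : H →ₗ[ℂ] H)) ≤ n := by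
    calc Module.finrank ℂ (LinearMap.range ((C * F * D : H →L[ℂ] H) : H →ₗ[ℂ] H))
        ≤ Module.finrank ℂ
          (Submodule.map (C : H →ₗ[ℂ] H) (LinearMap.range (F : H →ₗ[ℂ] H))) :=
          Submodule.finrank_mono hrange_le
      _ ≤ Module.finrank ℂ (LinearMap.range (F : H →ₗ[ℂ] H)) := Submodule.finrank_map_le _ _
      _ ≤ n := h2
  have hmem : ‖C * A * D - C * F * D‖ ∈ apxSet n (C * A * D) := ⟨C * F * D, hFD, hrank, rfl⟩
  refine (csInf_le (apxSet_bddBelow _ _) hmem).trans ?_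
  have heq : C * A * D - C * F * D = C * (A - F) * D := by noncomm_ring
  rw [heq, smul_eq_mul]
  calc ‖C * (A - F) * D‖ ≤ ‖C * (A - F)‖ * ‖D‖ := norm_mul_le _ _
    _ ≤ ‖C‖ * ‖A - F‖ * ‖D‖ := by
        have := norm_mul_le C (A - F)
        nlinarith [norm_nonneg D]
    _ = ‖C‖ * ‖D‖ * ‖A - F‖ := by ring

lemma approxNumber_add_le (A B : H →L[ℂ] H) (n₁ n₂ : ℕ) :
    approxNumber (n₁ + n₂) (A + B) ≤ approxNumber n₁ A + approxNumber n₂ B := by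
  have key : ∀ c ∈ apxSet n₁ A, ∀ d ∈ apxSet n₂ B,
      approxNumber (n₁ + n₂) (A + B) ≤ c + d := by
    rintro c ⟨F, hF1, hF2, rfl⟩ d ⟨G, hG1, hG2, rfl⟩
    have hle : LinearMap.range ((F + G : H →L[ℂ] H) : H →ₗ[ℂ] H) ≤
        LinearMap.range (F : H →ₗ[ℂ] H) ⊔ LinearMap.range (G : H →ₗ[ℂ] H) := by
      rintro x ⟨y, rfl⟩
      have : ((F + G : H →L[ℂ] H) : H →ₗ[ℂ] H) y = F y + G y := rfl
      rw [this]
      exact Submodule.add_mem_sup (LinearMap.mem_range_self _ y) (LinearMap.mem_range_self _ y)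
    have hFD : FiniteDimensional ℂ (LinearMap.range ((F + G : H →L[ℂ] H) : H →ₗ[ℂ] H)) :=
      Submodule.finiteDimensional_of_le hle
    have hrank : Module.finrank ℂ (LinearMap.range ((F + G : H →L[ℂ] H) : H →ₗ[ℂ] H))
        ≤ n₁ + n₂ := by
      calc Module.finrank ℂ (LinearMap.range ((F + G : H →L[ℂ] H) : H →ₗ[ℂ] H))
          ≤ Module.finrank ℂ
            (LinearMap.range (F : H →ₗ[ℂ] H) ⊔ LinearMap.range (G : H →ₗ[ℂ] H) :
              Submodule ℂ H) :=
            Submodule.finrank_mono hle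
        _ ≤ Module.finrank ℂ (LinearMap.range (F : H →ₗ[ℂ] H)) +
            Module.finrank ℂ (LinearMap.range (G : H →ₗ[ℂ] H)) :=
            Submodule.finrank_add_le_finrank_add_finrank _ _
        _ ≤ n₁ + n₂ := Nat.add_le_add hF2 hG2
    have hmem : ‖(A + B) - (F + G)‖ ∈ apxSet (n₁ + n₂) (A + B) := ⟨F + G, hFD, hrank, rfl⟩
    refine (approxNumber_le_of_mem hmem).trans ?_
    have heq : (A + B) - (F + G) = (A - F) + (B - G) := by abel
    rw [heq]
    exact norm_add_le _ _
  have h1 : ∀ d ∈ apxSet n₂ B, approxNumber (n₁ + n₂) (A + B) - d ≤ approxNumber n₁ A := by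
    intro d hd
    rw [approxNumber_def n₁]
    refine le_csInf (apxSet_nonempty _ _) fun c hc => ?_
    linarith [key c hc d hd]
  have h2 : approxNumber (n₁ + n₂) (A + B) - approxNumber n₁ A ≤ approxNumber n₂ B := by
    rw [approxNumber_def n₂]
    refine le_csInf (apxSet_nonempty _ _) fun d hd => ?_
    linarith [h1 d hd]
  linarith

lemma rpow_add_le {x y q : ℝ} (hx : 0 ≤ x) (hy : 0 ≤ y) (hq : 0 ≤ q) :
    (x + y) ^ q ≤ 2 ^ q * (x ^ q + y ^ q) := by
  rcases le_total x y with hxy | hxy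
  · calc (x + y) ^ q ≤ (2 * y) ^ q :=
        Real.rpow_le_rpow (by positivity) (by linarith) hq
      _ = 2 ^ q * y ^ q := Real.mul_rpow (by norm_num) hy
      _ ≤ 2 ^ q * (x ^ q + y ^ q) := by
          have h1 : (0:ℝ) ≤ x ^ q := Real.rpow_nonneg hx q
          have h2 : (0:ℝ) ≤ (2:ℝ) ^ q := Real.rpow_nonneg (by norm_num) q
          nlinarith
  · calc (x + y) ^ q ≤ (2 * x) ^ q :=
        Real.rpow_le_rpow (by positivity) (by linarith) hq
      _ = 2 ^ q * x ^ q := Real.mul_rpow (by norm_num) hx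
      _ ≤ 2 ^ q * (x ^ q + y ^ q) := by
          have h1 : (0:ℝ) ≤ y ^ q := Real.rpow_nonneg hy q
          have h2 : (0:ℝ) ≤ (2:ℝ) ^ q := Real.rpow_nonneg (by norm_num) q
          nlinarith

section MemLemmas

variable {p : ℝ≥0∞}

lemma toReal_pos (hp : 1 ≤ p) (hpt : p ≠ ⊤) : 0 < p.toReal :=
  ENNReal.toReal_pos (zero_lt_one.trans_le hp).ne' hpt

lemma memI_zero (hp : 1 ≤ p) : MemSchattenE p (0 : H →L[ℂ] H) := by
  constructor
  · have : IsCompactOperator (0 : H → H) := isCompactOperator_zero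
    simpa [ContinuousLinearMap.coe_zero'] using this
  · intro hpt
    simp only [approxNumber_zero_op, Real.zero_rpow (toReal_pos hp hpt).ne']
    exact summable_zero

lemma memI_conj (hp : 1 ≤ p) (C D : H →L[ℂ] H) {A : H →L[ℂ] H} (hA : MemSchattenE p A) :
    MemSchattenE p (C * A * D) := by
  constructor
  · have h1 : IsCompactOperator (⇑C ∘ ⇑A ∘ ⇑D) := (hA.1.comp_clm D).clm_comp C
    have h2 : ⇑(C * A * D) = ⇑C ∘ ⇑A ∘ ⇑D := rfl
    rwa [h2]
  · intro hpt
    have hq : (0:ℝ) ≤ p.toReal := (toReal_pos hp hpt).le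
    refine Summable.of_nonneg_of_le
      (fun k => Real.rpow_nonneg (approxNumber_nonneg _ _) _) (fun k => ?_)
      (((hA.2 hpt)).mul_left ((‖C‖ * ‖D‖) ^ p.toReal))
    calc approxNumber k (C * A * D) ^ p.toReal
        ≤ ((‖C‖ * ‖D‖) * approxNumber k A) ^ p.toReal :=
          Real.rpow_le_rpow (approxNumber_nonneg _ _) (approxNumber_mul_le C A D k) hq
      _ = (‖C‖ * ‖D‖) ^ p.toReal * approxNumber k A ^ p.toReal :=
          Real.mul_rpow (by positivity) (approxNumber_nonneg _ _)

lemma memI_smul (hp : 1 ≤ p) (t : ℂ) {A : H →L[ℂ] H} (hA : MemSchattenE p A) :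
    MemSchattenE p (t • A) := by
  have := memI_conj hp (t • (1 : H →L[ℂ] H)) 1 hA
  have heq : (t • (1 : H →L[ℂ] H)) * A * 1 = t • A := by
    rw [mul_one, smul_mul_assoc, one_mul]
  rwa [heq] at this

lemma memI_neg (hp : 1 ≤ p) {A : H →L[ℂ] H} (hA : MemSchattenE p A) :
    MemSchattenE p (-A) := by
  have := memI_smul hp (-1 : ℂ) hA
  rwa [neg_smul, one_smul] at this

lemma memI_add (hp : 1 ≤ p) {A B : H →L[ℂ] H} (hA : MemSchattenE p A) (hB : MemSchattenE p B) :
    MemSchattenE p (A + B) := by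
  constructor
  · have h1 := hA.1.add hB.1
    have h2 : ⇑(A + B) = ⇑A + ⇑B := by ext x; simp
    rwa [h2]
  · intro hpt
    have hq : (0:ℝ) < p.toReal := toReal_pos hp hpt
    have hG : Summable (fun k =>
        2 ^ p.toReal * (approxNumber k A ^ p.toReal + approxNumber k B ^ p.toReal)) :=
      ((hA.2 hpt).add (hB.2 hpt)).mul_left _
    have heven : ∀ k, approxNumber (2 * k) (A + B) ^ p.toReal ≤
        2 ^ p.toReal * (approxNumber k A ^ p.toReal + approxNumber k B ^ p.toReal) := by
      intro k
      have h1 : approxNumber (2 * k) (A + B) ≤ approxNumber k A + approxNumber k B := by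
        have := approxNumber_add_le A B k k
        rwa [two_mul]
      calc approxNumber (2 * k) (A + B) ^ p.toReal
          ≤ (approxNumber k A + approxNumber k B) ^ p.toReal :=
            Real.rpow_le_rpow (approxNumber_nonneg _ _) h1 hq.le
        _ ≤ 2 ^ p.toReal * (approxNumber k A ^ p.toReal + approxNumber k B ^ p.toReal) :=
            rpow_add_le (approxNumber_nonneg _ _) (approxNumber_nonneg _ _) hq.le
    refine Summable.even_add_odd ?_ ?_
    · exact Summable.of_nonneg_of_le
        (fun k => Real.rpow_nonneg (approxNumber_nonneg _ _) _) heven hG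
    · refine Summable.of_nonneg_of_le
        (fun k => Real.rpow_nonneg (approxNumber_nonneg _ _) _) (fun k => ?_) hG
      refine le_trans ?_ (heven k)
      exact Real.rpow_le_rpow (approxNumber_nonneg _ _)
        (approxNumber_antitone (by omega) _) hq.le

lemma memI_sub (hp : 1 ≤ p) {A B : H →L[ℂ] H} (hA : MemSchattenE p A) (hB : MemSchattenE p B) :
    MemSchattenE p (A - B) := by
  rw [sub_eq_add_neg]
  exact memI_add hp hA (memI_neg hp hB)

lemma memI_mul_left (hp : 1 ≤ p) (C : H →L[ℂ] H) {A : H →L[ℂ] H} (hA : MemSchattenE p A) :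
    MemSchattenE p (C * A) := by
  have := memI_conj hp C 1 hA
  rwa [mul_one] at this

lemma memI_mul_right (hp : 1 ≤ p) (D : H →L[ℂ] H) {A : H →L[ℂ] H} (hA : MemSchattenE p A) :
    MemSchattenE p (A * D) := by
  have := memI_conj hp 1 D hA
  rwa [one_mul] at this

end MemLemmas

/-- Extracting coefficients of an operator-valued polynomial known at sufficiently many
points, via the Vandermonde matrix. -/
lemma vandermonde_extract {p : ℝ≥0∞} (hp : 1 ≤ p) {N : ℕ} (c : Fin N → (H →L[ℂ] H))
    (s : Fin N → ℂ) (hs : Function.Injective s)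
    (h : ∀ i, MemSchattenE p (∑ k : Fin N, s i ^ (k : ℕ) • c k)) (k : Fin N) :
    MemSchattenE p (c k) := by
  set A := Matrix.vandermonde s with hA
  have hdet : IsUnit A.det := (Matrix.det_vandermonde_ne_zero_iff.mpr hs).isUnit
  have hinv : A⁻¹ * A = 1 := Matrix.nonsing_inv_mul A hdet
  have hck : c k = ∑ i, A⁻¹ k i • ∑ j, A i j • c j := by
    calc c k = ∑ j, ((1 : Matrix (Fin N) (Fin N) ℂ) k j) • c j := by
          rw [Finset.sum_eq_single k]
          · rw [Matrix.one_apply_eq, one_smul]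
          · intro j _ hj
            rw [Matrix.one_apply_ne (Ne.symm hj), zero_smul]
          · intro hk
            exact absurd (Finset.mem_univ k) hk
      _ = ∑ j, ((A⁻¹ * A) k j) • c j := by rw [hinv]
      _ = ∑ j, (∑ i, A⁻¹ k i * A i j) • c j := by
          simp only [Matrix.mul_apply]
      _ = ∑ j, ∑ i, (A⁻¹ k i * A i j) • c j := by
          simp only [Finset.sum_smul]
      _ = ∑ i, ∑ j, (A⁻¹ k i * A i j) • c j := Finset.sum_comm
      _ = ∑ i, A⁻¹ k i • ∑ j, A i j • c j := by
          simp only [Finset.smul_sum, smul_smul]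
  rw [hck]
  refine Finset.sum_induction _ (MemSchattenE p) (fun x y hx hy => memI_add hp hx hy)
    (memI_zero hp) (fun i _ => memI_smul hp _ ?_)
  have hAi : ∀ j, A i j = s i ^ (j : ℕ) := fun j => by rw [hA, Matrix.vandermonde_apply]
  simp only [hAi]
  exact h i

lemma commute_ringInverse_left {R : Type*} [Ring R] {x y : R} (hx : IsUnit x)
    (h : Commute x y) : Commute (Ring.inverse x) y := by
  obtain ⟨u, rfl⟩ := hx
  rw [Ring.inverse_unit]
  exact h.units_inv_left

section Main

variable {H : Type*} [NormedAddCommGroup H] [InnerProductSpace ℂ H] [CompleteSpace H]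

lemma isUnit_sub_smul_one {S : H →L[ℂ] H} (hS : IsSelfAdjoint S) {z : ℂ} (hz : z.im ≠ 0) :
    IsUnit (S - z • (1 : H →L[ℂ] H)) := by
  have h1 : z ∉ spectrum ℂ S := fun hmem => hz (hS.im_eq_zero_of_mem_spectrum hmem)
  have h2 := spectrum.notMem_iff.mp h1
  have h3 := h2.neg
  rwa [Algebra.algebraMap_eq_smul_one, neg_sub] at h3

set_option maxHeartbeats 2000000 in
lemma key_step (S₁ S₂ : H →L[ℂ] H) (hS₁ : IsSelfAdjoint S₁) (hS₂ : IsSelfAdjoint S₂)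
    {p : ℝ≥0∞} (hp : 1 ≤ p) (n : ℕ) (hn : 1 ≤ n)
    (ih : ∀ z : ℂ, z.im ≠ 0 →
      MemSchattenE p (Ring.inverse (S₂ - z • (1 : H →L[ℂ] H)) ^ n -
        Ring.inverse (S₁ - z • (1 : H →L[ℂ] H)) ^ n))
    {z : ℂ} (hz : z.im ≠ 0) :
    MemSchattenE p (Ring.inverse (S₂ - z • (1 : H →L[ℂ] H)) ^ (n + 1) -
      Ring.inverse (S₁ - z • (1 : H →L[ℂ] H)) ^ (n + 1)) := by
  set A₁ := S₁ - z • (1 : H →L[ℂ] H) with hA₁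
  set A₂ := S₂ - z • (1 : H →L[ℂ] H) with hA₂
  set b := Ring.inverse A₁ with hb
  set a := Ring.inverse A₂ with ha
  have hu₁ : IsUnit A₁ := isUnit_sub_smul_one hS₁ hz
  have hu₂ : IsUnit A₂ := isUnit_sub_smul_one hS₂ hz
  have hcast : ∀ m : ℕ, ((m : H →L[ℂ] H)) = (m : ℂ) • (1 : H →L[ℂ] H) := fun m => by
    rw [← Algebra.algebraMap_eq_smul_one, map_natCast]
  set c : ℕ → (H →L[ℂ] H) :=
    fun k => (n.choose k : ℂ) • (b ^ k * a ^ n - b ^ n * a ^ k) with hc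
  -- Main claim: for every admissible shift `s`, the polynomial combination lies in the class.
  have claim : ∀ s : ℂ, (z - s).im ≠ 0 →
      MemSchattenE p (∑ k ∈ Finset.range (n + 1), s ^ k • c k) := by
    intro s hs
    set w := z - s with hw
    set B₁ := S₁ - w • (1 : H →L[ℂ] H) with hB₁
    set B₂ := S₂ - w • (1 : H →L[ℂ] H) with hB₂
    have hv₁ : IsUnit B₁ := isUnit_sub_smul_one hS₁ hs
    have hv₂ : IsUnit B₂ := isUnit_sub_smul_one hS₂ hs
    have hB₁A : B₁ = A₁ + s • 1 := by
      rw [hB₁, hA₁, hw, sub_smul]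
      abel
    have hB₂A : B₂ = A₂ + s • 1 := by
      rw [hB₂, hA₂, hw, sub_smul]
      abel
    set u₁ := 1 + s • b with hu₁def
    set u₂ := 1 + s • a with hu₂def
    have hu₁eq : b * B₁ = u₁ := by
      rw [hB₁A, mul_add, Ring.inverse_mul_cancel _ hu₁, mul_smul_comm, mul_one]
    have hu₂eq : a * B₂ = u₂ := by
      rw [hB₂A, mul_add, Ring.inverse_mul_cancel _ hu₂, mul_smul_comm, mul_one]
    have hcommA₁B₁ : Commute A₁ B₁ := by
      rw [hB₁A]
      exact (Commute.refl A₁).add_right ((Commute.one_right A₁).smul_right s)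
    have hcommA₂B₂ : Commute A₂ B₂ := by
      rw [hB₂A]
      exact (Commute.refl A₂).add_right ((Commute.one_right A₂).smul_right s)
    have hbB₁ : Commute b B₁ := commute_ringInverse_left hu₁ hcommA₁B₁
    have haB₂ : Commute a B₂ := commute_ringInverse_left hu₂ hcommA₂B₂
    set r₁ := Ring.inverse B₁ with hr₁def
    set r₂ := Ring.inverse B₂ with hr₂def
    have hr₁b : Commute r₁ b := (commute_ringInverse_left hv₁ hbB₁.symm)
    have hr₂a : Commute r₂ a := (commute_ringInverse_left hv₂ haB₂.symm)
    have hr₁ : u₁ * r₁ = b := by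
      rw [← hu₁eq, mul_assoc, Ring.mul_inverse_cancel _ hv₁, mul_one]
    have hr₂ : r₂ * u₂ = a := by
      rw [← hu₂eq, haB₂.eq, ← mul_assoc, Ring.inverse_mul_cancel _ hv₂, one_mul]
    have hcomm_u₁r₁ : Commute u₁ r₁ := by
      rw [hu₁def]
      exact ((Commute.one_right r₁).add_right (hr₁b.smul_right s)).symm
    have hcomm_r₂u₂ : Commute r₂ u₂ := by
      rw [hu₂def]
      exact ((Commute.one_right r₂).add_right (hr₂a.smul_right s))
    have hpow₁ : u₁ ^ n * r₁ ^ n = b ^ n := by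
      rw [← hcomm_u₁r₁.mul_pow, hr₁]
    have hpow₂ : r₂ ^ n * u₂ ^ n = a ^ n := by
      rw [← hcomm_r₂u₂.mul_pow, hr₂]
    have hX : MemSchattenE p (r₂ ^ n - r₁ ^ n) := ih w hs
    have hY : MemSchattenE p (u₁ ^ n * (r₂ ^ n - r₁ ^ n) * u₂ ^ n) :=
      memI_conj hp (u₁ ^ n) (u₂ ^ n) hX
    have hEq : u₁ ^ n * (r₂ ^ n - r₁ ^ n) * u₂ ^ n = u₁ ^ n * a ^ n - b ^ n * u₂ ^ n := by
      rw [mul_sub, sub_mul, mul_assoc, hpow₂, hpow₁]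
    have hbin : u₁ ^ n * a ^ n - b ^ n * u₂ ^ n
        = ∑ k ∈ Finset.range (n + 1), s ^ k • c k := by
      have e₁ : u₁ ^ n = ∑ k ∈ Finset.range (n + 1),
          (s • b) ^ k * 1 ^ (n - k) * (n.choose k : H →L[ℂ] H) := by
        rw [hu₁def, add_comm (1 : H →L[ℂ] H)]
        exact Commute.add_pow (Commute.one_right (s • b)) n
      have e₂ : u₂ ^ n = ∑ k ∈ Finset.range (n + 1),
          (s • a) ^ k * 1 ^ (n - k) * (n.choose k : H →L[ℂ] H) := by
        rw [hu₂def, add_comm (1 : H →L[ℂ] H)]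
        exact Commute.add_pow (Commute.one_right (s • a)) n
      rw [e₁, e₂, Finset.sum_mul, Finset.mul_sum, ← Finset.sum_sub_distrib]
      refine Finset.sum_congr rfl fun k _ => ?_
      rw [hcast, hc]
      simp only [smul_pow, one_pow, mul_one, smul_mul_assoc, mul_smul_comm, smul_smul,
        smul_sub, mul_comm]
    rw [← hbin, ← hEq]
    exact hY
  -- Vandermonde extraction
  have hcmem : ∀ k : Fin (n + 1), MemSchattenE p (c k) := by
    intro k
    have hcst : (z.im : ℂ) * Complex.I ≠ 0 :=
      mul_ne_zero (Complex.ofReal_ne_zero.mpr hz) Complex.I_ne_zero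
    set sf : Fin (n + 1) → ℂ := fun i => -(((i : ℕ) : ℂ) * ((z.im : ℂ) * Complex.I)) with hsf
    have hsinj : Function.Injective sf := by
      intro i j hij
      rw [hsf] at hij
      simp only [neg_inj] at hij
      have h1 : ((i : ℕ) : ℂ) = ((j : ℕ) : ℂ) := mul_right_cancel₀ hcst hij
      have h2 : (i : ℕ) = (j : ℕ) := Nat.cast_injective h1
      exact Fin.val_injective h2
    have hsadm : ∀ i : Fin (n + 1), (z - sf i).im ≠ 0 := by
      intro i
      have him : (z - sf i).im = (1 + (i : ℕ)) * z.im := by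
        rw [hsf]
        simp [Complex.sub_im, Complex.mul_im, Complex.mul_re]
        ring
      rw [him]
      exact mul_ne_zero (by positivity) hz
    have hpoly : ∀ i : Fin (n + 1),
        MemSchattenE p (∑ k : Fin (n + 1), sf i ^ (k : ℕ) • c (k : ℕ)) := by
      intro i
      have := claim (sf i) (hsadm i)
      rwa [← Fin.sum_univ_eq_sum_range (fun k => sf i ^ k • c k) (n + 1)] at this
    exact vandermonde_extract hp (fun k : Fin (n + 1) => c (k : ℕ)) sf hsinj hpoly k
  -- take k = 1
  have hnC : ((n : ℂ)) ≠ 0 := Nat.cast_ne_zero.mpr (by omega)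
  have hY : MemSchattenE p (b * a ^ n - b ^ n * a) := by
    have hk := hcmem ⟨1, by omega⟩
    have hck1 : c 1 = (n : ℂ) • (b * a ^ n - b ^ n * a) := by
      rw [hc]
      simp [Nat.choose_one_right]
    have h2 := memI_smul hp ((n : ℂ))⁻¹ hk
    rw [show ((⟨1, by omega⟩ : Fin (n + 1)) : ℕ) = 1 from rfl] at h2
    rw [hck1, smul_smul, inv_mul_cancel₀ hnC, one_smul] at h2
    exact h2
  have hE : MemSchattenE p (a ^ n - b ^ n) := ih z hz
  have hfinal : a ^ (n + 1) - b ^ (n + 1)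
      = (a ^ n - b ^ n) * a + (-(b * a ^ n - b ^ n * a) + b * (a ^ n - b ^ n)) := by
    rw [pow_succ a, pow_succ' b]
    noncomm_ring
  rw [hfinal]
  exact memI_add hp (memI_mul_right hp a hE)
    (memI_add hp (memI_neg hp hY) (memI_mul_left hp b hE))

end Main

end SchattenAux

/-- If `S₁, S₂` are self-adjoint and `(S₂ - z)^{-m} - (S₁ - z)^{-m} ∈ B_p(H)` for all
`z ∈ ℂ \ ℝ`, then `(S₂ - z)^{-n} - (S₁ - z)^{-n} ∈ B_p(H)` for all `z ∈ ℂ \ ℝ` and `n ≥ m`. -/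
theorem memSchatten_resolvent_power_of_memSchatten
    {H : Type*} [NormedAddCommGroup H] [InnerProductSpace ℂ H] [CompleteSpace H]
    (S₁ S₂ : H →L[ℂ] H) (hS₁ : IsSelfAdjoint S₁) (hS₂ : IsSelfAdjoint S₂)
    (p : ℝ≥0∞) (hp : 1 ≤ p) (m : ℕ) (hm : 1 ≤ m)
    (h : ∀ z : ℂ, z.im ≠ 0 →
      MemSchattenE p (Ring.inverse (S₂ - z • (1 : H →L[ℂ] H)) ^ m -
        Ring.inverse (S₁ - z • (1 : H →L[ℂ] H)) ^ m)) :
    ∀ z : ℂ, z.im ≠ 0 → ∀ n : ℕ, m ≤ n →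
      MemSchattenE p (Ring.inverse (S₂ - z • (1 : H →L[ℂ] H)) ^ n -
        Ring.inverse (S₁ - z • (1 : H →L[ℂ] H)) ^ n) := by
  intro z hz n hn
  induction n, hn using Nat.le_induction generalizing z hz with
  | base => exact h z hz
  | succ n hn ih => exact SchattenAux.key_step S₁ S₂ hS₁ hS₂ hp n (hm.trans hn) ih hz
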